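/- Let $B = (b_{pqr})_{p,q,r \in \{1,2\}}$ be a real $2\times 2\times 2$ array symmetric in its last two indices ($b_{pqr} = b_{prq}$), and let $\sigma_k = (\cos(\pi k/3), \sin(\pi k/3))$, $k = 0,\ldots,6$ with $\sigma_6 = \sigma_0$, and $\mathbb{J}$ the rotation by $\pi/2$. Define $B{:}[v]^2 \in \mathbb{R}^2$ by $(B{:}[v]^2)_p = \sum_{q,r} b_{pqr} v_q v_r$. Then $\sum_{k=0}^5 \mathrm{tr}\big[(\sigma_k | \sigma_{k+1})^{-1} \, (B{:}[\sigma_k]^2 \,|\, B{:}[\sigma_{k+1}]^2)\big]\, \mathbb{J}(\sigma_k - \sigma_{k+1}) = 2\sqrt{3}\, (b_{111} + b_{212},\; b_{222} + b_{112})^T$. -/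

import Mathlib

set_option maxHeartbeats 1000000
open Matrix Real

lemma tr_aux (a b c d : ℝ) (M : Matrix (Fin 2) (Fin 2) ℝ) :
    Matrix.trace ((!![a,b;c,d])⁻¹ * M)
      = (a*d-b*c)⁻¹ * (d * M 0 0 - b * M 1 0 - c * M 0 1 + a * M 1 1) := by
  rw [Matrix.inv_def, Matrix.adjugate_fin_two_of, Matrix.det_fin_two_of]
  rw [Ring.inverse_eq_inv']
  simp [Matrix.trace_fin_two, Matrix.mul_apply, Matrix.vecMul, dotProduct,
    Fin.sum_univ_two, Matrix.smul_apply]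
  ring

/-- Hexagonal trace identity (Lemma on traces):
`∑_{k=0}^5 tr[(σ_k|σ_{k+1})⁻¹ (B:[σ_k]² | B:[σ_{k+1}]²)] J(σ_k - σ_{k+1})
  = 2√3 (b₁₁₁ + b₂₁₂, b₂₂₂ + b₁₁₂)ᵀ`. -/
theorem stmt_9 (B : Fin 2 → Fin 2 → Fin 2 → ℝ)
    (hsym : ∀ p q r, B p q r = B p r q)
    (σ : ℕ → Fin 2 → ℝ)
    (hσ : ∀ k, σ k = ![Real.cos (π * k / 3), Real.sin (π * k / 3)])
    (Bq : (Fin 2 → ℝ) → Fin 2 → ℝ)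
    (hBq : ∀ v p, Bq v p = ∑ q : Fin 2, ∑ r : Fin 2, B p q r * v q * v r) :
    ∑ k ∈ Finset.range 6,
        (Matrix.trace
            ((!![σ k 0, σ (k + 1) 0; σ k 1, σ (k + 1) 1])⁻¹ *
              !![Bq (σ k) 0, Bq (σ (k + 1)) 0; Bq (σ k) 1, Bq (σ (k + 1)) 1]))
          • ((!![0, -1; 1, 0] : Matrix (Fin 2) (Fin 2) ℝ).mulVec (σ k - σ (k + 1)))
      = (2 * Real.sqrt 3) • ![B 0 0 0 + B 1 0 1, B 1 1 1 + B 0 0 1] := by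
  set s := Real.sqrt 3 with hs
  have hss : s * s = 3 := Real.mul_self_sqrt (by norm_num)
  have e0 : σ 0 = ![1, 0] := by rw [hσ]; norm_num
  have e1 : σ 1 = ![1/2, s/2] := by
    rw [hσ]; push_cast
    rw [show π * 1 / 3 = π/3 by ring, Real.cos_pi_div_three, Real.sin_pi_div_three]
  have e2 : σ 2 = ![-(1/2), s/2] := by
    rw [hσ]; push_cast
    rw [show π * 2 / 3 = π - π/3 by ring, Real.cos_pi_sub, Real.sin_pi_sub,
      Real.cos_pi_div_three, Real.sin_pi_div_three]
  have e3 : σ 3 = ![-1, 0] := by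
    rw [hσ]; push_cast
    rw [show π * 3 / 3 = π by ring, Real.cos_pi, Real.sin_pi]
  have e4 : σ 4 = ![-(1/2), -(s/2)] := by
    rw [hσ]; push_cast
    rw [show π * 4 / 3 = π + π/3 by ring, Real.cos_add, Real.sin_add, Real.cos_pi,
      Real.sin_pi, Real.cos_pi_div_three, Real.sin_pi_div_three]
    norm_num
    exact hs.symm
  have e5 : σ 5 = ![1/2, -(s/2)] := by
    rw [hσ]; push_cast
    rw [show π * 5 / 3 = 2*π - π/3 by ring]
    rw [Real.cos_sub, Real.sin_sub, Real.cos_two_pi, Real.sin_two_pi,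
      Real.cos_pi_div_three, Real.sin_pi_div_three]
    norm_num
    exact hs.symm
  have e6 : σ 6 = ![1, 0] := by
    rw [hσ]; push_cast
    rw [show π * 6 / 3 = 2*π by ring, Real.cos_two_pi, Real.sin_two_pi]
  have h10 : ∀ p, B p 1 0 = B p 0 1 := fun p => hsym p 1 0
  simp only [Finset.sum_range_succ, Finset.sum_range_zero, zero_add]
  norm_num only
  rw [e0, e1, e2, e3, e4, e5, e6]
  simp only [hBq, Fin.sum_univ_two, h10, tr_aux,
    Matrix.cons_val_zero, Matrix.cons_val_one, Matrix.head_cons,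
    Matrix.cons_val', Matrix.empty_val', Matrix.cons_val_fin_one]
  funext i
  fin_cases i <;>
  · simp [Matrix.mulVec, dotProduct, Fin.sum_univ_two]
    have hs0 : s ≠ 0 := by rw [hs]; positivity
    field_simp
    nlinarith [hss, Real.sqrt_nonneg 3]
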